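/- Invariance under similarities: Let f : ℝ^d → ℝ^d be a surjective similarity with ratio λ > 0, i.e. a bijection satisfying ‖f(x) − f(y)‖ = λ‖x − y‖ for all x, y. Then a set S ⊆ ℝ^d is (α, β, c, ρ, ℋ)-winning if and only if f(S) is (α, β, c, λρ, f(ℋ))-winning, where f(ℋ) := {f(H) : H ∈ ℋ}. -/

import Mathlib

open Metric Set Filter
open scoped ENNReal

/-- The radius associated to an (optional) erased pair `(set, radius)`; `0` if unused. -/
def optRad {E : Type*} (p : Option (Set E × ℝ)) : ℝ := p.elim 0 Prod.snd

/-- The region erased by one of Alice's moves: the union of the closed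
`ρ_i`-neighborhoods `N(L_i, ρ_i)` of the chosen sets. -/
def erasedSet {E : Type*} [PseudoEMetricSpace E] (a : ℕ → Option (Set E × ℝ)) : Set E :=
  ⋃ i, (a i).elim ∅ fun p => Metric.cthickening p.2 p.1

/-- Legality of one of Alice's moves in the `(α, β, c, ρ, ℋ)`-potential game, when Bob
has just played a ball of radius `ρm`: each erased set is a closed neighborhood
`N(L, ρ')` with `L ∈ ℋ` and `ρ' > 0`; if `c > 0` the radii satisfy
`∑ ρ_i^c ≤ (α ρm)^c`, and if `c = 0` Alice erases at most one set, of radius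
`≤ α ρm`. (Alice may always pass, by choosing no set at all.) -/
def AliceLegal {E : Type*} (H : Set (Set E)) (α c ρm : ℝ)
    (a : ℕ → Option (Set E × ℝ)) : Prop :=
  (∀ i, ∀ p ∈ a i, p.1 ∈ H ∧ 0 < p.2) ∧
  (if 0 < c then (∑' i, optRad (a i) ^ c) ≤ (α * ρm) ^ c
   else (∀ i, i ≠ 0 → a i = none) ∧ optRad (a 0) ≤ α * ρm)

/-- `S` is an `(α, β, c, ρ₀, ℋ)`-winning set for the potential game: Alice has a
strategy `σ` (assigning to each history of Bob's balls a countable collection of pairs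
`(L_i, ρ_i)`, encoding the erased neighborhoods `N(L_i, ρ_i)`) such that, for every
play of Bob — a sequence of closed balls `B_m = B[x_m, ρ_m]` with `ρ₀ ≤ ρ 0`,
`B_{m+1} ⊆ B_m`, `ρ_{m+1} ≥ β ρ_m` and `ρ_m → 0` — all of Alice's responses are legal,
and any point `z` of `⋂_m B_m` (i.e. the outcome `x_∞`) avoiding all erased sets lies
in `S`. -/
def IsWinning {E : Type*} [NormedAddCommGroup E] (S : Set E) (H : Set (Set E))
    (α β c ρ₀ : ℝ) : Prop :=
  ∃ σ : List (E × ℝ) → ℕ → Option (Set E × ℝ),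
    ∀ (x : ℕ → E) (ρ : ℕ → ℝ),
      (∀ m, 0 < ρ m) →
      ρ₀ ≤ ρ 0 →
      (∀ m, Metric.closedBall (x (m+1)) (ρ (m+1)) ⊆ Metric.closedBall (x m) (ρ m)) →
      (∀ m, β * ρ m ≤ ρ (m+1)) →
      Filter.Tendsto ρ Filter.atTop (nhds 0) →
      (∀ m, AliceLegal H α c (ρ m) (σ (List.ofFn fun k : Fin (m+1) => (x k, ρ k)))) ∧
      ∀ z : E, (∀ m, z ∈ Metric.closedBall (x m) (ρ m)) →
        z ∉ ⋃ m, erasedSet (σ (List.ofFn fun k : Fin (m+1) => (x k, ρ k))) →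
        z ∈ S

/-- `ℋ_M`: the family of all subsets of `E` that are unions of at most `M` spheres. -/
def spheresFamily (E : Type*) [NormedAddCommGroup E] (M : ℕ) : Set (Set E) :=
  {A | ∃ s : Finset (E × ℝ), s.card ≤ M ∧ A = ⋃ p ∈ s, Metric.sphere p.1 p.2}

section Aux
variable {E : Type*} [NormedAddCommGroup E]

lemma infEdist_image_sim (f : E → E) (lam : ℝ) (hlam : 0 < lam)
    (hsim : ∀ x y : E, ‖f x - f y‖ = lam * ‖x - y‖) (w : E) (A : Set E) :
    Metric.infEDist (f w) (f '' A) = ENNReal.ofReal lam * Metric.infEDist w A := by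
  have hne : ENNReal.ofReal lam ≠ 0 := by simp [ENNReal.ofReal_eq_zero, not_le, hlam]
  have hnt : ENNReal.ofReal lam ≠ ⊤ := ENNReal.ofReal_ne_top
  have hedist : ∀ y : E, edist (f w) (f y) = ENNReal.ofReal lam * edist w y := by
    intro y
    rw [edist_dist, edist_dist, dist_eq_norm, dist_eq_norm, hsim,
      ENNReal.ofReal_mul hlam.le]
  simp only [Metric.infEDist, iInf_image, hedist,
    ENNReal.mul_iInf_of_ne hne hnt]

lemma optRad_map (f : E → E) (lam : ℝ) (o : Option (Set E × ℝ)) :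
    optRad (o.map fun p => (f '' p.1, lam * p.2)) = lam * optRad o := by
  cases o <;> simp [optRad]

lemma isWinning_map (f g : E → E) (hgf : ∀ x, g (f x) = x) (hfg : ∀ x, f (g x) = x)
    (lam : ℝ) (hlam : 0 < lam)
    (hsim : ∀ x y : E, ‖f x - f y‖ = lam * ‖x - y‖)
    (S : Set E) (H : Set (Set E)) (α β c ρ : ℝ) (hα : 0 < α)
    (hw : IsWinning S H α β c ρ) :
    IsWinning (f '' S) ((fun A => f '' A) '' H) α β c (lam * ρ) := by
  obtain ⟨σ, hσ⟩ := hw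
  refine ⟨fun L i => (σ (L.map fun q => (g q.1, q.2 * lam⁻¹)) i).map
    fun p => (f '' p.1, lam * p.2), ?_⟩
  intro x r hr hρ0 hnest hβr htend
  set x' : ℕ → E := fun m => g (x m) with hx'
  set r' : ℕ → ℝ := fun m => r m * lam⁻¹ with hr'
  have hball : ∀ (z y : E) (t : ℝ),
      z ∈ closedBall (g y) (t * lam⁻¹) ↔ f z ∈ closedBall y t := by
    intro z y t
    have h1 : ‖f z - y‖ = lam * ‖z - g y‖ := by
      conv_lhs => rw [← hfg y]
      exact hsim z (g y)
    simp only [Metric.mem_closedBall, dist_eq_norm, h1, ← div_eq_mul_inv,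
      le_div_iff₀' hlam]
  have hlist : ∀ m : ℕ,
      (List.ofFn fun k : Fin (m+1) => (x k, r k)).map (fun q => (g q.1, q.2 * lam⁻¹))
        = List.ofFn fun k : Fin (m+1) => (x' k, r' k) := by
    intro m; rw [List.map_ofFn]; rfl
  obtain ⟨hleg, hmem⟩ := hσ x' r'
    (fun m => mul_pos (hr m) (inv_pos.2 hlam))
    (by rw [hr']; simp only; rw [← div_eq_mul_inv, le_div_iff₀ hlam, mul_comm]; exact hρ0)
    (fun m y hy => (hball y (x m) (r m)).2 (hnest m ((hball y (x (m+1)) (r (m+1))).1 hy)))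
    (fun m => by
      show β * (r m * lam⁻¹) ≤ r (m+1) * lam⁻¹
      rw [← mul_assoc]
      exact mul_le_mul_of_nonneg_right (hβr m) (inv_nonneg.2 hlam.le))
    (by simpa using htend.mul_const lam⁻¹)
  constructor
  · intro m
    have h := hleg m
    simp only [hlist m]
    set a := σ (List.ofFn fun k : Fin (m+1) => (x' k, r' k)) with ha
    obtain ⟨h1, h2⟩ := h
    have hrad_nonneg : ∀ i, 0 ≤ optRad (a i) := by
      intro i
      cases hai : a i with
      | none => simp [optRad]
      | some p => simpa [optRad, hai] using (h1 i p (by rw [hai]; rfl)).2.le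
    constructor
    · intro i p hp
      rw [Option.mem_def, Option.map_eq_some_iff] at hp
      obtain ⟨q, hq, rfl⟩ := hp
      obtain ⟨hq1, hq2⟩ := h1 i q hq
      exact ⟨Set.mem_image_of_mem _ hq1, mul_pos hlam hq2⟩
    · split_ifs with hcpos
      · rw [if_pos hcpos] at h2
        have key : ∀ i, optRad ((a i).map fun p => (f '' p.1, lam * p.2)) ^ c
            = lam ^ c * optRad (a i) ^ c := by
          intro i
          rw [optRad_map, Real.mul_rpow hlam.le (hrad_nonneg i)]
        calc (∑' i, optRad ((a i).map fun p => (f '' p.1, lam * p.2)) ^ c)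
            = ∑' i, lam ^ c * optRad (a i) ^ c := by simp only [key]
          _ = lam ^ c * ∑' i, optRad (a i) ^ c := tsum_mul_left
          _ ≤ lam ^ c * (α * r' m) ^ c :=
              mul_le_mul_of_nonneg_left h2 (Real.rpow_nonneg hlam.le c)
          _ = (α * r m) ^ c := by
              rw [← Real.mul_rpow hlam.le
                (mul_nonneg hα.le (le_of_lt (mul_pos (hr m) (inv_pos.2 hlam))))]
              congr 1
              show lam * (α * (r m * lam⁻¹)) = α * r m
              rw [mul_left_comm, mul_comm (r m) lam⁻¹, mul_inv_cancel_left₀ hlam.ne']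
      · rw [if_neg hcpos] at h2
        refine ⟨fun i hi => by show Option.map _ (a i) = none; rw [h2.1 i hi]; rfl, ?_⟩
        rw [optRad_map]
        calc lam * optRad (a 0) ≤ lam * (α * r' m) :=
              mul_le_mul_of_nonneg_left h2.2 hlam.le
          _ = α * r m := by
              show lam * (α * (r m * lam⁻¹)) = α * r m
              rw [mul_left_comm, mul_comm (r m) lam⁻¹, mul_inv_cancel_left₀ hlam.ne']
  · intro z hz hnot
    have hzball : ∀ m, g z ∈ closedBall (x' m) (r' m) := by
      intro m
      exact (hball (g z) (x m) (r m)).2 (by rw [hfg]; exact hz m)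
    have hznot : g z ∉ ⋃ m, erasedSet (σ (List.ofFn fun k : Fin (m+1) => (x' k, r' k))) := by
      intro hmem'
      apply hnot
      simp only [Set.mem_iUnion, erasedSet] at hmem' ⊢
      obtain ⟨m, i, hi⟩ := hmem'
      refine ⟨m, i, ?_⟩
      simp only [hlist m]
      cases hai : σ (List.ofFn fun k : Fin (m+1) => (x' k, r' k)) i with
      | none => rw [hai] at hi; simp at hi
      | some p =>
          rw [hai] at hi
          simp only [Option.elim, Option.map_some] at hi ⊢
          rw [mem_cthickening_iff] at hi ⊢
          have : z = f (g z) := (hfg z).symm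
          rw [this, infEdist_image_sim f lam hlam hsim,
            ENNReal.ofReal_mul hlam.le]
          exact mul_le_mul_right hi _
    exact ⟨g z, hmem (g z) hzball hznot, hfg z⟩

end Aux

/-- **Invariance under similarities.** If `f : ℝ^d → ℝ^d` is a surjective
similarity with ratio `λ > 0`, then `S` is `(α, β, c, ρ, ℋ)`-winning iff `f(S)` is
`(α, β, c, λρ, f(ℋ))`-winning. -/
theorem winning_similarity_invariant {E : Type*} [NormedAddCommGroup E]
    [NormedSpace ℝ E] [FiniteDimensional ℝ E]
    (f : E → E) (hbij : Function.Bijective f) (lam : ℝ) (hlam : 0 < lam)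
    (hsim : ∀ x y : E, ‖f x - f y‖ = lam * ‖x - y‖)
    (S : Set E) (H : Set (Set E)) (α β c ρ : ℝ)
    (hα : 0 < α) (hβ : β ∈ Set.Ioo (0 : ℝ) 1) (hc : 0 ≤ c) (hρ : 0 < ρ) :
    IsWinning S H α β c ρ ↔
      IsWinning (f '' S) ((fun A => f '' A) '' H) α β c (lam * ρ) := by
  haveI : Nonempty E := ⟨0⟩
  set g := Function.invFun f with hg
  have hgf : ∀ x, g (f x) = x := fun x => Function.leftInverse_invFun hbij.1 x
  have hfg : ∀ x, f (g x) = x := fun x => Function.rightInverse_invFun hbij.2 x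
  have hsimg : ∀ x y : E, ‖g x - g y‖ = lam⁻¹ * ‖x - y‖ := by
    intro x y
    have h := hsim (g x) (g y)
    rw [hfg, hfg] at h
    rw [h, inv_mul_cancel_left₀ hlam.ne']
  constructor
  · exact fun hw => isWinning_map f g hgf hfg lam hlam hsim S H α β c ρ hα hw
  · intro hw
    have h2 := isWinning_map g f hfg hgf lam⁻¹ (inv_pos.2 hlam) hsimg (f '' S)
      ((fun A => f '' A) '' H) α β c (lam * ρ) hα hw
    have hS : g '' (f '' S) = S := by rw [Set.image_image]; simp [hgf]
    have hH : (fun A => g '' A) '' ((fun A => f '' A) '' H) = H := by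
      rw [Set.image_image]; simp [Set.image_image, hgf]
    have hρ' : lam⁻¹ * (lam * ρ) = ρ := by rw [inv_mul_cancel_left₀ hlam.ne']
    rwa [hS, hH, hρ'] at h2
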